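/- Let (ψ_n) and (h_n) be real sequences and a, b : [0,T] → ℝ continuous, R : [0,T] → ℝ continuous, λ_n = n²π². Suppose ∑ ψ_n² < ∞ and sup_{t} ∑ h_n(t)² < ∞ with h_n continuous, and a(t) ≥ a₀ > 0, |e^{∫₀ᵗ b}| ≤ K, |R| ≤ K₂ on [0,T]. Then for each t ∈ (0,T], ∑_{n≥1} (ψ_n e^{-∫₀ᵗ(a(τ)λ_n - b(τ))dτ} + ∫₀ᵗ R(τ) h_n(τ) e^{-∫_τᵗ(a(z)λ_n - b(z))dz} dτ)² ≤ 2C₁ ∑_n ψ_n² + 2C₂ sup_{τ∈[0,t]} ∑_n h_n(τ)² for some constants C₁, C₂ depending only on K, K₂, a₀, T. -/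

import Mathlib

open Real MeasureTheory intervalIntegral

lemma sq_intervalIntegral_le (t : ℝ) (ht : 0 ≤ t) (f : ℝ → ℝ)
    (hf : ContinuousOn f (Set.Icc 0 t)) :
    (∫ τ in (0:ℝ)..t, |f τ|) ^ 2 ≤ t * ∫ τ in (0:ℝ)..t, (f τ) ^ 2 := by
  have hmeas : MeasurableSet (Set.Ioc (0:ℝ) t) := measurableSet_Ioc
  set μ := volume.restrict (Set.Ioc (0:ℝ) t) with hμ
  haveI : IsFiniteMeasure μ := by
    constructor
    rw [hμ, Measure.restrict_apply_univ, Real.volume_Ioc]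
    exact ENNReal.ofReal_lt_top
  have hconj : (2:ℝ).HolderConjugate 2 := Real.holderConjugate_iff.mpr ⟨by norm_num, by norm_num⟩
  obtain ⟨C, hC⟩ := (isCompact_Icc).exists_bound_of_continuousOn hf
  have hfm : AEStronglyMeasurable f μ :=
    (hf.mono Set.Ioc_subset_Icc_self).aestronglyMeasurable hmeas
  have hmem : MemLp (fun τ => |f τ|) (ENNReal.ofReal 2) μ := by
    refine MemLp.of_bound hfm.norm C ?_
    filter_upwards [ae_restrict_mem hmeas] with x hx
    simpa using hC x (Set.Ioc_subset_Icc_self hx)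
  have hmem1 : MemLp (fun _ : ℝ => (1:ℝ)) (ENNReal.ofReal 2) μ := memLp_const 1
  have key := integral_mul_le_Lp_mul_Lq_of_nonneg (μ := μ) hconj
    (Filter.Eventually.of_forall (fun _ => zero_le_one))
    (Filter.Eventually.of_forall (fun x => abs_nonneg (f x))) hmem1 hmem
  have h1 : (∫ x, (1:ℝ) * |f x| ∂μ) = ∫ τ in (0:ℝ)..t, |f τ| := by
    rw [intervalIntegral.integral_of_le ht]; simp [hμ]
  have h2 : (∫ x, (1:ℝ) ^ (2:ℝ) ∂μ) = t := by
    simp [hμ, Real.volume_Ioc, ENNReal.toReal_ofReal ht, ht]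
  have h3 : (∫ x, |f x| ^ (2:ℝ) ∂μ) = ∫ τ in (0:ℝ)..t, (f τ) ^ 2 := by
    rw [intervalIntegral.integral_of_le ht, hμ]
    refine setIntegral_congr_fun hmeas (fun x _ => ?_)
    rw [show ((2:ℝ)) = ((2:ℕ):ℝ) by norm_num, Real.rpow_natCast]
    simp [sq_abs]
  rw [h1, h2, h3] at key
  have hInonneg : 0 ≤ ∫ τ in (0:ℝ)..t, (f τ) ^ 2 := by
    apply intervalIntegral.integral_nonneg ht
    intro x _; positivity
  have habs : 0 ≤ ∫ τ in (0:ℝ)..t, |f τ| := by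
    apply intervalIntegral.integral_nonneg ht
    intro x _; exact abs_nonneg _
  calc (∫ τ in (0:ℝ)..t, |f τ|) ^ 2
      ≤ (t ^ (1/(2:ℝ)) * (∫ τ in (0:ℝ)..t, (f τ)^2) ^ (1/(2:ℝ))) ^ 2 := by
        apply pow_le_pow_left₀ habs key
    _ = t * ∫ τ in (0:ℝ)..t, (f τ)^2 := by
        rw [mul_pow, ← Real.rpow_natCast (t ^ (1/(2:ℝ))) 2,
          ← Real.rpow_natCast ((∫ τ in (0:ℝ)..t, (f τ)^2) ^ (1/(2:ℝ))) 2,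
          ← Real.rpow_mul ht, ← Real.rpow_mul hInonneg]
        norm_num

theorem L2_bound_of_spectral_solution (T : ℝ) (hT : 0 < T)
    (ψ : ℕ → ℝ) (h : ℕ → ℝ → ℝ) (a b R : ℝ → ℝ)
    (lam : ℕ → ℝ) (hlam : ∀ n, lam n = (n : ℝ) ^ 2 * Real.pi ^ 2)
    (ha : ContinuousOn a (Set.Icc 0 T)) (hb : ContinuousOn b (Set.Icc 0 T))
    (hR : ContinuousOn R (Set.Icc 0 T))
    (hhcont : ∀ n, ContinuousOn (h n) (Set.Icc 0 T))
    (hψsum : Summable (fun n : ℕ => (ψ n) ^ 2))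
    (Mh : ℝ) (hhsum : ∀ t ∈ Set.Icc (0:ℝ) T, Summable (fun n : ℕ => (h n t) ^ 2))
    (hhbdd : ∀ t ∈ Set.Icc (0:ℝ) T, ∑' n : ℕ, (h n t) ^ 2 ≤ Mh)
    (a₀ : ℝ) (ha₀ : 0 < a₀) (haa : ∀ t ∈ Set.Icc (0:ℝ) T, a₀ ≤ a t)
    (K K₂ : ℝ)
    (hK : ∀ t ∈ Set.Icc (0:ℝ) T, |Real.exp (∫ τ in (0:ℝ)..t, b τ)| ≤ K)
    (hK₂ : ∀ t ∈ Set.Icc (0:ℝ) T, |R t| ≤ K₂) :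
    ∃ C₁ C₂ : ℝ, 0 < C₁ ∧ 0 < C₂ ∧
      ∀ t ∈ Set.Ioc (0:ℝ) T,
        ∑' n : ℕ,
          (ψ (n + 1) * Real.exp (-∫ τ in (0:ℝ)..t, (a τ * lam (n + 1) - b τ)) +
            ∫ τ in (0:ℝ)..t,
              R τ * h (n + 1) τ *
                Real.exp (-∫ z in τ..t, (a z * lam (n + 1) - b z))) ^ 2 ≤
        2 * C₁ * (∑' n : ℕ, (ψ n) ^ 2) +
        2 * C₂ * (⨆ τ : Set.Icc (0:ℝ) t, ∑' n : ℕ, (h n τ) ^ 2) := by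
  obtain ⟨Cb, hCb⟩ := (isCompact_Icc).exists_bound_of_continuousOn hb
  have hCb0 : 0 ≤ Cb :=
    le_trans (norm_nonneg (b 0)) (hCb 0 (Set.left_mem_Icc.2 hT.le))
  set Ke : ℝ := Real.exp (Cb * T) with hKedef
  have hKepos : 0 < Ke := Real.exp_pos _
  have hK₂0 : 0 ≤ K₂ := le_trans (abs_nonneg _) (hK₂ 0 (Set.left_mem_Icc.2 hT.le))
  refine ⟨Ke ^ 2, K₂ ^ 2 * Ke ^ 2 * T ^ 2 + 1, by positivity, by positivity, ?_⟩
  intro t ht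
  obtain ⟨ht0, htT⟩ := ht
  have hIccsub : Set.Icc (0:ℝ) t ⊆ Set.Icc 0 T := Set.Icc_subset_Icc le_rfl htT
  -- nonnegativity of lam
  have hlam0 : ∀ n, 0 ≤ lam n := by intro n; rw [hlam]; positivity
  -- the exponential bound
  have hE : ∀ n : ℕ, ∀ τ ∈ Set.Icc (0:ℝ) t,
      Real.exp (-∫ z in τ..t, (a z * lam n - b z)) ≤ Ke := by
    intro n τ hτ
    obtain ⟨hτ0, hτt⟩ := hτ
    have hsub : Set.uIcc τ t ⊆ Set.Icc 0 T := by
      rw [Set.uIcc_of_le hτt]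
      exact Set.Icc_subset_Icc hτ0 htT
    have hia : IntervalIntegrable a volume τ t := (ha.mono hsub).intervalIntegrable
    have hib : IntervalIntegrable b volume τ t := (hb.mono hsub).intervalIntegrable
    have hsplit : (∫ z in τ..t, (a z * lam n - b z)) =
        (∫ z in τ..t, a z) * lam n - ∫ z in τ..t, b z := by
      rw [intervalIntegral.integral_sub (hia.mul_const _) hib,
        intervalIntegral.integral_mul_const]
    have hXnn : 0 ≤ ∫ z in τ..t, a z := by
      apply intervalIntegral.integral_nonneg hτt
      intro x hx
      exact le_trans ha₀.le (haa x (hsub (by rw [Set.uIcc_of_le hτt]; exact hx)))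
    have hY : (∫ z in τ..t, b z) ≤ Cb * T := by
      have := intervalIntegral.norm_integral_le_of_norm_le_const
        (C := Cb) (f := b) (a := τ) (b := t) (fun x hx => by
          apply hCb
          apply hsub
          rw [Set.uIcc_of_le hτt]
          exact Set.Ioc_subset_Icc_self (by rwa [Set.uIoc_of_le hτt] at hx))
      have habs : |(∫ z in τ..t, b z)| ≤ Cb * |t - τ| := this
      have h1 : |t - τ| ≤ T := by
        rw [abs_of_nonneg (by linarith)]; linarith
      calc (∫ z in τ..t, b z) ≤ |(∫ z in τ..t, b z)| := le_abs_self _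
        _ ≤ Cb * |t - τ| := habs
        _ ≤ Cb * T := by nlinarith
    rw [hsplit, hKedef]
    apply Real.exp_le_exp.2
    have : 0 ≤ (∫ z in τ..t, a z) * lam n := mul_nonneg hXnn (hlam0 n)
    linarith
  -- continuity of the exponential factor
  have hG : ∀ n : ℕ, ContinuousOn
      (fun τ => Real.exp (-∫ z in τ..t, (a z * lam n - b z))) (Set.Icc 0 t) := by
    intro n
    have hint : IntegrableOn (fun z => a z * lam n - b z) (Set.uIcc 0 t) volume := by
      rw [Set.uIcc_of_le ht0.le]
      exact (((ha.mono hIccsub).mul continuousOn_const).sub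
        (hb.mono hIccsub)).integrableOn_compact isCompact_Icc
    have := intervalIntegral.continuousOn_primitive_interval_left
      (f := fun z => a z * lam n - b z) (μ := volume) (a := 0) (b := t) hint
    rw [Set.uIcc_of_le ht0.le] at this
    exact (Real.continuous_exp.comp continuous_neg).comp_continuousOn this
  -- continuity/integrability of the integrand
  have hF : ∀ n : ℕ, ContinuousOn
      (fun τ => R τ * h (n + 1) τ *
        Real.exp (-∫ z in τ..t, (a z * lam (n + 1) - b z))) (Set.Icc 0 t) := by
    intro n
    exact ((hR.mono hIccsub).mul ((hhcont (n + 1)).mono hIccsub)).mul (hG (n + 1))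
  have hFint : ∀ n : ℕ, IntervalIntegrable
      (fun τ => R τ * h (n + 1) τ *
        Real.exp (-∫ z in τ..t, (a z * lam (n + 1) - b z))) volume 0 t := by
    intro n
    apply ContinuousOn.intervalIntegrable
    rw [Set.uIcc_of_le ht0.le]
    exact hF n
  set A : ℕ → ℝ := fun n =>
    ψ (n + 1) * Real.exp (-∫ τ in (0:ℝ)..t, (a τ * lam (n + 1) - b τ)) with hAdef
  set B : ℕ → ℝ := fun n =>
    ∫ τ in (0:ℝ)..t, R τ * h (n + 1) τ *
      Real.exp (-∫ z in τ..t, (a z * lam (n + 1) - b z)) with hBdef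
  set S : ℝ := ⨆ τ : Set.Icc (0:ℝ) t, ∑' n : ℕ, (h n τ) ^ 2 with hSdef
  have hne : Nonempty (Set.Icc (0:ℝ) t) := ⟨⟨0, Set.left_mem_Icc.2 ht0.le⟩⟩
  have hBddAbove : BddAbove (Set.range fun τ : Set.Icc (0:ℝ) t => ∑' n : ℕ, (h n τ) ^ 2) := by
    refine ⟨Mh, ?_⟩
    rintro x ⟨τ, rfl⟩
    exact hhbdd τ (hIccsub τ.2)
  have hSge : ∀ τ ∈ Set.Icc (0:ℝ) t, (∑' n : ℕ, (h n τ) ^ 2) ≤ S := by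
    intro τ hτ
    exact le_ciSup hBddAbove ⟨τ, hτ⟩
  have hS0 : 0 ≤ S :=
    le_trans (tsum_nonneg (fun n => sq_nonneg _)) (hSge 0 (Set.left_mem_Icc.2 ht0.le))
  -- bound on A n ^ 2
  have hA : ∀ n, (A n) ^ 2 ≤ Ke ^ 2 * (ψ (n + 1)) ^ 2 := by
    intro n
    have h1 : Real.exp (-∫ τ in (0:ℝ)..t, (a τ * lam (n + 1) - b τ)) ≤ Ke :=
      hE (n + 1) 0 (Set.left_mem_Icc.2 ht0.le)
    have h2 : (0:ℝ) ≤ Real.exp (-∫ τ in (0:ℝ)..t, (a τ * lam (n + 1) - b τ)) :=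
      (Real.exp_pos _).le
    rw [hAdef]
    simp only [mul_pow]
    rw [mul_comm (Ke ^ 2)]
    exact mul_le_mul_of_nonneg_left (by nlinarith) (sq_nonneg _)
  -- bound on B n ^ 2
  set g : ℕ → ℝ := fun n => ∫ τ in (0:ℝ)..t, (h (n + 1) τ) ^ 2 with hgdef
  have hg0 : ∀ n, 0 ≤ g n := by
    intro n
    apply intervalIntegral.integral_nonneg ht0.le
    intro x _; exact sq_nonneg _
  have hB : ∀ n, (B n) ^ 2 ≤ K₂ ^ 2 * Ke ^ 2 * t * g n := by
    intro n
    have habsB : |B n| ≤ K₂ * Ke * ∫ τ in (0:ℝ)..t, |h (n + 1) τ| := by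
      rw [hBdef]
      calc |∫ τ in (0:ℝ)..t, R τ * h (n + 1) τ *
            Real.exp (-∫ z in τ..t, (a z * lam (n + 1) - b z))|
          ≤ ∫ τ in (0:ℝ)..t, |R τ * h (n + 1) τ *
            Real.exp (-∫ z in τ..t, (a z * lam (n + 1) - b z))| :=
            intervalIntegral.abs_integral_le_integral_abs ht0.le
        _ ≤ ∫ τ in (0:ℝ)..t, K₂ * Ke * |h (n + 1) τ| := by
            apply intervalIntegral.integral_mono_on ht0.le
            · exact (hFint n).abs
            · apply ContinuousOn.intervalIntegrable
              rw [Set.uIcc_of_le ht0.le]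
              exact (continuousOn_const.mul
                (((hhcont (n + 1)).mono hIccsub).abs))
            · intro x hx
              have hex : (0:ℝ) < Real.exp (-∫ z in x..t, (a z * lam (n + 1) - b z)) :=
                Real.exp_pos _
              have hex2 := hE (n + 1) x hx
              have hRx := hK₂ x (hIccsub hx)
              rw [abs_mul, abs_mul]
              rw [abs_of_pos hex]
              calc |R x| * |h (n + 1) x| *
                    Real.exp (-∫ z in x..t, (a z * lam (n + 1) - b z))
                  ≤ K₂ * |h (n + 1) x| * Ke := by
                    have h1 : |R x| * |h (n + 1) x| ≤ K₂ * |h (n + 1) x| :=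
                      mul_le_mul_of_nonneg_right hRx (abs_nonneg _)
                    exact mul_le_mul h1 hex2 hex.le
                      (mul_nonneg hK₂0 (abs_nonneg _))
                _ = K₂ * Ke * |h (n + 1) x| := by ring
        _ = K₂ * Ke * ∫ τ in (0:ℝ)..t, |h (n + 1) τ| := by
            rw [intervalIntegral.integral_const_mul]
    have hcs := sq_intervalIntegral_le t ht0.le (h (n + 1))
      ((hhcont (n + 1)).mono hIccsub)
    have habsI : 0 ≤ ∫ τ in (0:ℝ)..t, |h (n + 1) τ| := by
      apply intervalIntegral.integral_nonneg ht0.le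
      intro x _; exact abs_nonneg _
    calc (B n) ^ 2 = |B n| ^ 2 := (sq_abs _).symm
      _ ≤ (K₂ * Ke * ∫ τ in (0:ℝ)..t, |h (n + 1) τ|) ^ 2 :=
          pow_le_pow_left₀ (abs_nonneg _) habsB 2
      _ = (K₂ * Ke) ^ 2 * (∫ τ in (0:ℝ)..t, |h (n + 1) τ|) ^ 2 := by ring
      _ ≤ (K₂ * Ke) ^ 2 * (t * g n) := by
          apply mul_le_mul_of_nonneg_left hcs (by positivity)
      _ = K₂ ^ 2 * Ke ^ 2 * t * g n := by ring
  -- summability of g and bound on its sum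
  have hgpartial : ∀ N : ℕ, (∑ n ∈ Finset.range N, g n) ≤ t * S := by
    intro N
    have hint : ∀ n ∈ Finset.range N, IntervalIntegrable
        (fun τ => (h (n + 1) τ) ^ 2) volume 0 t := by
      intro n _
      apply ContinuousOn.intervalIntegrable
      rw [Set.uIcc_of_le ht0.le]
      exact ((hhcont (n + 1)).mono hIccsub).pow 2
    have heq : (∑ n ∈ Finset.range N, g n) =
        ∫ τ in (0:ℝ)..t, (∑ n ∈ Finset.range N, (h (n + 1) τ) ^ 2) :=
      (intervalIntegral.integral_finset_sum hint).symm
    rw [heq]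
    calc (∫ τ in (0:ℝ)..t, ∑ n ∈ Finset.range N, (h (n + 1) τ) ^ 2)
        ≤ ∫ _ in (0:ℝ)..t, S := by
          apply intervalIntegral.integral_mono_on ht0.le
          · apply ContinuousOn.intervalIntegrable
            rw [Set.uIcc_of_le ht0.le]
            exact continuousOn_finset_sum _ (fun n _ =>
              ((hhcont (n + 1)).mono hIccsub).pow 2)
          · exact intervalIntegrable_const
          · intro τ hτ
            have hsum := hhsum τ (hIccsub hτ)
            have h1 : (∑ n ∈ Finset.range N, (h (n + 1) τ) ^ 2) ≤
                ∑' n : ℕ, (h n τ) ^ 2 := by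
              have : (∑ n ∈ Finset.range N, (h (n + 1) τ) ^ 2) =
                  ∑ m ∈ (Finset.range N).map
                    ⟨fun n => n + 1, fun x y hxy => by simpa using hxy⟩, (h m τ) ^ 2 := by
                rw [Finset.sum_map]; rfl
              rw [this]
              exact Summable.sum_le_tsum _ (fun i _ => sq_nonneg _) hsum
            exact le_trans h1 (hSge τ hτ)
      _ = t * S := by rw [intervalIntegral.integral_const]; simp
  have hgsum : Summable g := summable_of_sum_range_le hg0 hgpartial
  have hgtsum : (∑' n, g n) ≤ t * S := Real.tsum_le_of_sum_range_le hg0 hgpartial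
  -- summability of shifted psi
  have hψ' : Summable (fun n : ℕ => (ψ (n + 1)) ^ 2) :=
    hψsum.comp_injective (fun x y hxy => by simpa using hxy)
  have hAsum : Summable (fun n => (A n) ^ 2) :=
    Summable.of_nonneg_of_le (fun n => sq_nonneg _) hA (hψ'.mul_left _)
  have hBsum : Summable (fun n => (B n) ^ 2) :=
    Summable.of_nonneg_of_le (fun n => sq_nonneg _) hB (hgsum.mul_left _)
  have hRHSsum : Summable (fun n => 2 * (A n) ^ 2 + 2 * (B n) ^ 2) :=
    (hAsum.mul_left 2).add (hBsum.mul_left 2)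
  have hpoint : ∀ n, (A n + B n) ^ 2 ≤ 2 * (A n) ^ 2 + 2 * (B n) ^ 2 := by
    intro n; nlinarith [sq_nonneg (A n - B n)]
  have hLHSsum : Summable (fun n => (A n + B n) ^ 2) :=
    Summable.of_nonneg_of_le (fun n => sq_nonneg _) hpoint hRHSsum
  have step1 : (∑' n, (A n + B n) ^ 2) ≤ ∑' n, (2 * (A n) ^ 2 + 2 * (B n) ^ 2) :=
    Summable.tsum_le_tsum hpoint hLHSsum hRHSsum
  have step2 : (∑' n, (2 * (A n) ^ 2 + 2 * (B n) ^ 2)) =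
      2 * (∑' n, (A n) ^ 2) + 2 * (∑' n, (B n) ^ 2) := by
    rw [Summable.tsum_add (hAsum.mul_left 2) (hBsum.mul_left 2), tsum_mul_left, tsum_mul_left]
  have step3 : (∑' n, (A n) ^ 2) ≤ Ke ^ 2 * ∑' n, (ψ n) ^ 2 := by
    calc (∑' n, (A n) ^ 2) ≤ ∑' n, Ke ^ 2 * (ψ (n + 1)) ^ 2 :=
          Summable.tsum_le_tsum hA hAsum (hψ'.mul_left _)
      _ = Ke ^ 2 * ∑' n, (ψ (n + 1)) ^ 2 := tsum_mul_left
      _ ≤ Ke ^ 2 * ∑' n, (ψ n) ^ 2 := by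
          apply mul_le_mul_of_nonneg_left _ (by positivity)
          exact Summable.tsum_le_tsum_of_inj (fun n => n + 1) (fun x y hxy => by simpa using hxy)
            (fun c _ => sq_nonneg _) (fun n => le_rfl) hψ' hψsum
  have step4 : (∑' n, (B n) ^ 2) ≤ K₂ ^ 2 * Ke ^ 2 * t * (t * S) := by
    calc (∑' n, (B n) ^ 2) ≤ ∑' n, K₂ ^ 2 * Ke ^ 2 * t * g n :=
          Summable.tsum_le_tsum hB hBsum (hgsum.mul_left _)
      _ = K₂ ^ 2 * Ke ^ 2 * t * ∑' n, g n := tsum_mul_left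
      _ ≤ K₂ ^ 2 * Ke ^ 2 * t * (t * S) := by
          apply mul_le_mul_of_nonneg_left hgtsum (by positivity)
  have hψnn : 0 ≤ ∑' n, (ψ n) ^ 2 := tsum_nonneg (fun n => sq_nonneg _)
  calc (∑' n, (A n + B n) ^ 2)
      ≤ 2 * (∑' n, (A n) ^ 2) + 2 * (∑' n, (B n) ^ 2) := by rw [← step2]; exact step1
    _ ≤ 2 * (Ke ^ 2 * ∑' n, (ψ n) ^ 2) + 2 * (K₂ ^ 2 * Ke ^ 2 * t * (t * S)) := by
        linarith
    _ ≤ 2 * Ke ^ 2 * (∑' n, (ψ n) ^ 2) +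
        2 * (K₂ ^ 2 * Ke ^ 2 * T ^ 2 + 1) * S := by
        have ht2 : t ^ 2 ≤ T ^ 2 := by nlinarith
        have hKK : (0:ℝ) ≤ K₂ ^ 2 * Ke ^ 2 := by positivity
        have h5 : K₂ ^ 2 * Ke ^ 2 * (t ^ 2 * S) ≤ K₂ ^ 2 * Ke ^ 2 * (T ^ 2 * S) :=
          mul_le_mul_of_nonneg_left (mul_le_mul_of_nonneg_right ht2 hS0) hKK
        nlinarith [h5, hS0]
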